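/- Let m, n be positive natural numbers, let a ≤ n, b ≤ m, and t < n be natural numbers with a·m = b·n, and let s : {0, …, m−1} → ℤ be a function such that a + t − n ≤ s(i) ≤ a for every i and the sum of s(i) over all i equals t·b. Then the number of indices i with s(i) = a is at most m − b. -/

import Mathlib

/-- Non-square case: if `s : Fin m → ℤ` satisfies `a + t - n ≤ s i ≤ a` for all `i`
and `∑ i, s i = t·b`, with `a·m = b·n`, then the number of indices with
`s i = a` is at most `m - b`. -/
theorem nonsquare_card_A3_le (m n : ℕ) (hm : 0 < m) (hn : 0 < n)
    (a b t : ℕ) (ha : a ≤ n) (hb : b ≤ m) (ht : t < n)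
    (hab : a * m = b * n)
    (s : Fin m → ℤ)
    (hlb : ∀ i, (a : ℤ) + t - n ≤ s i)
    (hub : ∀ i, s i ≤ (a : ℤ))
    (hsum : ∑ i, s i = (t : ℤ) * b) :
    (Finset.univ.filter (fun i : Fin m => s i = (a : ℤ))).card ≤ m - b := by
  set A := Finset.univ.filter (fun i : Fin m => s i = (a : ℤ)) with hA
  set k := A.card with hk
  have hkm : k ≤ m := by
    calc k ≤ (Finset.univ : Finset (Fin m)).card := Finset.card_le_card (Finset.filter_subset _ _)
    _ = m := by simp
  -- split the sum
  have hsplit : ∑ i, s i = ∑ i ∈ A, s i + ∑ i ∈ Aᶜ, s i :=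
    (Finset.sum_add_sum_compl A s).symm
  have hA_sum : ∑ i ∈ A, s i = (k : ℤ) * a := by
    rw [Finset.sum_congr rfl (fun i hi => (Finset.mem_filter.mp hi).2)]
    simp [hk, mul_comm]
    exact Or.inl rfl
  have hcompl_card : (Aᶜ : Finset (Fin m)).card = m - k := by
    simp [Finset.card_compl, hk]
  have hAc_sum : ((m - k : ℕ) : ℤ) * ((a : ℤ) + t - n) ≤ ∑ i ∈ Aᶜ, s i := by
    calc ((m - k : ℕ) : ℤ) * ((a : ℤ) + t - n)
        = (Aᶜ.card : ℤ) * ((a : ℤ) + t - n) := by rw [hcompl_card]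
      _ ≤ ∑ i ∈ Aᶜ, s i := by
          rw [← nsmul_eq_mul]
          exact Finset.card_nsmul_le_sum _ _ _ (fun i _ => hlb i)
  have hmk : ((m - k : ℕ) : ℤ) = (m : ℤ) - k := by
    exact_mod_cast Int.ofNat_sub hkm
  have key : (k : ℤ) * a + ((m : ℤ) - k) * ((a : ℤ) + t - n) ≤ (t : ℤ) * b := by
    rw [← hsum, hsplit, hA_sum]
    have := hAc_sum
    rw [hmk] at this
    linarith
  have habZ : (a : ℤ) * m = (b : ℤ) * n := by exact_mod_cast hab
  have hkb : (k : ℤ) + b ≤ m := by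
    have htz : (t:ℤ) < n := by exact_mod_cast ht
    have hnt : (0 : ℤ) < (n : ℤ) - t := by linarith
    nlinarith [hnt, key, habZ]
  have : k + b ≤ m := by exact_mod_cast hkb
  omega
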